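/- Let φ(k) = (1+k)e^{-2k} + e^{2(1 - 1/(1+k))} - 2 - k for k near 0. Then the Taylor expansion of φ at 0 has vanishing coefficients up to order 5, and the coefficient of k⁶ equals -4/45. In particular φ(k) < 0 for all sufficiently small k > 0. -/

import Mathlib

open Real Set

noncomputable def Efun (k : ℝ) : ℝ := Real.exp (2 * (1 - 1 / (1 + k)))

lemma Efun_eq : Efun = fun k : ℝ => Real.exp (2 * (1 - (1+k)⁻¹)) := by
  funext k; simp [Efun, one_div]

lemma hasDerivAt_inv1 {k : ℝ} (hk : (1:ℝ) + k ≠ 0) :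
    HasDerivAt (fun k : ℝ => (1 + k)⁻¹) (-((1+k)⁻¹)^2) k := by
  have h1 : HasDerivAt (fun k : ℝ => 1 + k) 1 k := (hasDerivAt_id k).const_add 1
  have := h1.inv hk
  refine this.congr_deriv ?_
  field_simp

lemma hasDerivAt_Efun {k : ℝ} (hk : (1:ℝ) + k ≠ 0) :
    HasDerivAt Efun (2 * ((1+k)⁻¹)^2 * Efun k) k := by
  have h3 : HasDerivAt (fun k : ℝ => 2 * (1 - (1+k)⁻¹)) (2 * ((1+k)⁻¹)^2) k := by
    have := ((hasDerivAt_inv1 hk).const_sub 1).const_mul 2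
    refine this.congr_deriv ?_; ring
  have h4 := h3.exp
  rw [Efun_eq]
  convert h4 using 1
  ring

lemma hasDerivAt_exp2 {k : ℝ} : HasDerivAt (fun k : ℝ => Real.exp (-2*k)) (-2 * Real.exp (-2*k)) k := by
  have := ((hasDerivAt_id k).const_mul (-2 : ℝ)).exp
  refine this.congr_deriv ?_; simp only [id_eq]; ring

noncomputable def gg : ℕ → ℝ → ℝ
  | 0, k => (1 + k) * Real.exp (-2*k) + Efun k - 2 - k
  | 1, k => (-1 - 2*k) * Real.exp (-2*k) + 2*((1+k)⁻¹)^2 * Efun k - 1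
  | 2, k => (4*k) * Real.exp (-2*k) + (4*((1+k)⁻¹)^4 - 4*((1+k)⁻¹)^3) * Efun k
  | 3, k => (4 - 8*k) * Real.exp (-2*k)
      + (8*((1+k)⁻¹)^6 - 24*((1+k)⁻¹)^5 + 12*((1+k)⁻¹)^4) * Efun k
  | 4, k => (-16 + 16*k) * Real.exp (-2*k)
      + (16*((1+k)⁻¹)^8 - 96*((1+k)⁻¹)^7 + 144*((1+k)⁻¹)^6 - 48*((1+k)⁻¹)^5) * Efun k
  | 5, k => (48 - 32*k) * Real.exp (-2*k)
      + (32*((1+k)⁻¹)^10 - 320*((1+k)⁻¹)^9 + 960*((1+k)⁻¹)^8 - 960*((1+k)⁻¹)^7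
          + 240*((1+k)⁻¹)^6) * Efun k
  | _, k => (-128 + 64*k) * Real.exp (-2*k)
      + (64*((1+k)⁻¹)^12 - 960*((1+k)⁻¹)^11 + 4800*((1+k)⁻¹)^10 - 9600*((1+k)⁻¹)^9
          + 7200*((1+k)⁻¹)^8 - 1440*((1+k)⁻¹)^7) * Efun k

lemma gg_step {n : ℕ} (hn : n ≤ 5) {k : ℝ} (hk : (1:ℝ) + k ≠ 0) :
    HasDerivAt (gg n) (gg (n+1) k) k := by
  have ht := hasDerivAt_inv1 hk
  have hE := hasDerivAt_Efun hk
  have he : HasDerivAt (fun k : ℝ => Real.exp (-2*k)) (-2 * Real.exp (-2*k)) k :=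
    hasDerivAt_exp2
  interval_cases n
  · have h := ((((hasDerivAt_id k).const_add 1).mul he).add hE).sub_const 2 |>.sub
      (hasDerivAt_id k)
    refine h.congr_deriv ?_
    simp only [gg, id_eq, Pi.pow_apply, Pi.sub_apply, Pi.add_apply]
    push_cast
    ring
  · have hA := ((hasDerivAt_id k).const_mul (2:ℝ)).const_sub (-1:ℝ)
    have hB := ((ht.pow 2).const_mul (2:ℝ)).mul hE
    have h := ((hA.mul he).add hB).sub_const 1
    refine h.congr_deriv ?_
    simp only [gg, id_eq, Pi.pow_apply, Pi.sub_apply, Pi.add_apply]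
    push_cast
    ring
  · have hA := (hasDerivAt_id k).const_mul (4:ℝ)
    have hB := (((ht.pow 4).const_mul (4:ℝ)).sub ((ht.pow 3).const_mul (4:ℝ))).mul hE
    have h := (hA.mul he).add hB
    refine h.congr_deriv ?_
    simp only [gg, id_eq, Pi.pow_apply, Pi.sub_apply, Pi.add_apply]
    push_cast
    ring
  · have hA := ((hasDerivAt_id k).const_mul (8:ℝ)).const_sub (4:ℝ)
    have hB := ((((ht.pow 6).const_mul (8:ℝ)).sub ((ht.pow 5).const_mul (24:ℝ))).add
      ((ht.pow 4).const_mul (12:ℝ))).mul hE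
    have h := (hA.mul he).add hB
    refine h.congr_deriv ?_
    simp only [gg, id_eq, Pi.pow_apply, Pi.sub_apply, Pi.add_apply]
    push_cast
    ring
  · have hA := ((hasDerivAt_id k).const_mul (16:ℝ)).const_add (-16:ℝ)
    have hB := (((((ht.pow 8).const_mul (16:ℝ)).sub ((ht.pow 7).const_mul (96:ℝ))).add
      ((ht.pow 6).const_mul (144:ℝ))).sub ((ht.pow 5).const_mul (48:ℝ))).mul hE
    have h := (hA.mul he).add hB
    refine h.congr_deriv ?_
    simp only [gg, id_eq, Pi.pow_apply, Pi.sub_apply, Pi.add_apply]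
    push_cast
    ring
  · have hA := ((hasDerivAt_id k).const_mul (32:ℝ)).const_sub (48:ℝ)
    have hB := ((((((ht.pow 10).const_mul (32:ℝ)).sub ((ht.pow 9).const_mul (320:ℝ))).add
      ((ht.pow 8).const_mul (960:ℝ))).sub ((ht.pow 7).const_mul (960:ℝ))).add
      ((ht.pow 6).const_mul (240:ℝ))).mul hE
    have h := (hA.mul he).add hB
    refine h.congr_deriv ?_
    simp only [gg, id_eq, Pi.pow_apply, Pi.sub_apply, Pi.add_apply]
    push_cast
    ring

lemma iter_eq {φ : ℝ → ℝ} (hφ0 : φ = gg 0) {s : Set ℝ} (hs : UniqueDiffOn ℝ s)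
    (hsub : ∀ k ∈ s, (1:ℝ) + k ≠ 0) :
    ∀ n, n ≤ 6 → ∀ k ∈ s, iteratedDerivWithin n φ s k = gg n k := by
  intro n
  induction n with
  | zero => intro _ k _; simp [hφ0]
  | succ m ih =>
    intro hm k hk
    rw [iteratedDerivWithin_succ,
      derivWithin_congr (fun y hy => ih (by omega) y hy) (ih (by omega) k hk)]
    exact ((gg_step (by omega) (hsub k hk)).hasDerivWithinAt).derivWithin (hs k hk)

lemma iter_open {f : ℝ → ℝ} {s : Set ℝ} (hs : IsOpen s) {x : ℝ} (hx : x ∈ s) (n : ℕ) :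
    iteratedDerivWithin n f s x = iteratedDeriv n f x := by
  simp only [iteratedDerivWithin, iteratedDeriv, iteratedFDerivWithin_of_isOpen n hs hx]

lemma gg_zero : ∀ n ≤ 5, gg n 0 = 0 := by
  intro n hn
  interval_cases n <;> norm_num [gg, Efun]

lemma gg6_zero : gg 6 0 = -64 := by norm_num [gg, Efun]


/-- For `φ(k) = (1+k)e^{-2k} + e^{2(1-1/(1+k))} - 2 - k`, all Taylor coefficients at `0`
up to order 5 vanish, the coefficient of `k⁶` is `-4/45`, and `φ(k) < 0` for all
sufficiently small `k > 0`. -/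
theorem stmt_16 (φ : ℝ → ℝ)
    (hφ : ∀ k, φ k = (1 + k) * Real.exp (-2 * k)
      + Real.exp (2 * (1 - 1 / (1 + k))) - 2 - k) :
    (∀ n : ℕ, n ≤ 5 → iteratedDeriv n φ 0 = 0) ∧
    iteratedDeriv 6 φ 0 / 720 = -4 / 45 ∧
    ∃ δ > 0, ∀ k : ℝ, 0 < k → k < δ → φ k < 0 := by
  have hφg : φ = gg 0 := funext fun k => by rw [hφ]; rfl
  have hso : IsOpen (Set.Ioi (-1:ℝ)) := isOpen_Ioi
  have h0mem : (0:ℝ) ∈ Set.Ioi (-1:ℝ) := by norm_num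
  have hne : ∀ k ∈ Set.Ioi (-1:ℝ), (1:ℝ) + k ≠ 0 := fun k hk =>
    ne_of_gt (by have := mem_Ioi.1 hk; linarith)
  refine ⟨?_, ?_, ?_⟩
  · intro n hn
    rw [← iter_open hso h0mem n, iter_eq hφg hso.uniqueDiffOn hne n (by omega) 0 h0mem]
    exact gg_zero n hn
  · rw [← iter_open hso h0mem 6, iter_eq hφg hso.uniqueDiffOn hne 6 le_rfl 0 h0mem, gg6_zero]
    norm_num
  · -- continuity of gg 6 at 0
    have hc : ContinuousAt (gg 6) 0 := by
      show ContinuousAt (fun k : ℝ => (-128 + 64*k) * Real.exp (-2*k)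
        + (64*((1+k)⁻¹)^12 - 960*((1+k)⁻¹)^11 + 4800*((1+k)⁻¹)^10 - 9600*((1+k)⁻¹)^9
            + 7200*((1+k)⁻¹)^8 - 1440*((1+k)⁻¹)^7) * Real.exp (2 * (1 - 1/(1+k)))) 0
      fun_prop (disch := norm_num)
    have hlt : ∀ᶠ y in nhds 0, gg 6 y < 0 :=
      Filter.Tendsto.eventually_lt_const (by rw [gg6_zero]; norm_num) hc
    obtain ⟨δ, hδpos, hball⟩ := Metric.eventually_nhds_iff.1 hlt
    refine ⟨δ, hδpos, fun k hk0 hkδ => ?_⟩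
    have hneIcc : ∀ y ∈ Set.Icc (0:ℝ) k, (1:ℝ) + y ≠ 0 := fun y hy =>
      ne_of_gt (by have := hy.1; linarith)
    have hud : UniqueDiffOn ℝ (Set.Icc (0:ℝ) k) := uniqueDiffOn_Icc hk0
    have hcd : ContDiffOn ℝ 5 φ (Set.Icc 0 k) := by
      have hcd0 : ContDiffOn ℝ 5 (gg 0) (Set.Ioi (-1:ℝ)) := by
        show ContDiffOn ℝ 5 (fun k : ℝ => (1 + k) * Real.exp (-2 * k)
          + Real.exp (2 * (1 - 1 / (1 + k))) - 2 - k) (Set.Ioi (-1:ℝ))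
        fun_prop (disch := (intros; apply hne; assumption))
      exact hφg ▸ hcd0.mono (fun y hy => lt_of_lt_of_le (by norm_num) hy.1)
    have hdiff : DifferentiableOn ℝ (iteratedDerivWithin 5 φ (Set.Icc 0 k)) (Set.Ioo 0 k) := by
      intro y hy
      have hgd := (gg_step (n := 5) (by norm_num)
        (hneIcc y (Set.Ioo_subset_Icc_self hy))).differentiableAt
      exact hgd.differentiableWithinAt.congr
        (fun z hz => iter_eq hφg hud hneIcc 5 (by norm_num) z (Set.Ioo_subset_Icc_self hz))
        (iter_eq hφg hud hneIcc 5 (by norm_num) y (Set.Ioo_subset_Icc_self hy))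
    obtain ⟨x', hx', heq⟩ := taylor_mean_remainder_lagrange hk0.ne
      (by rwa [Set.uIcc_of_le hk0.le]) (by rwa [Set.uIcc_of_le hk0.le, Set.uIoo_of_le hk0.le])
    rw [Set.uIcc_of_le hk0.le] at heq
    rw [Set.uIoo_of_le hk0.le] at hx'
    have hT : taylorWithinEval φ 5 (Set.Icc 0 k) 0 k = 0 := by
      rw [taylor_within_apply]
      apply Finset.sum_eq_zero
      intro i hi
      have hi6 : i ≤ 5 := by simp at hi; omega
      rw [iter_eq hφg hud hneIcc i (by omega) 0 ⟨le_refl 0, le_of_lt hk0⟩,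
        gg_zero i (by exact hi6), smul_zero]
    have h6 : iteratedDerivWithin (5+1) φ (Set.Icc 0 k) x' = gg 6 x' :=
      iter_eq hφg hud hneIcc 6 le_rfl x' (Set.Ioo_subset_Icc_self hx')
    rw [hT, sub_zero, h6] at heq
    have hneg : gg 6 x' < 0 := hball (by
      rw [Real.dist_eq, sub_zero, abs_of_pos hx'.1]; exact lt_trans hx'.2 hkδ)
    rw [heq]
    apply div_neg_of_neg_of_pos
    · exact mul_neg_of_neg_of_pos hneg (pow_pos (by linarith) (5+1))
    · norm_num [Nat.factorial]
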